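/- Rank trade-off inequality (equations (12)–(13) in the proof of Theorem 1). Let C be an (n,k,l) MDS linear array code over a finite field F and let P be an hl × nl matrix over F whose rows lie in C^⊥, where 1 ≤ h ≤ min{u, s̄u − v}, such that rank [P_{j'_1},…,P_{j'_h}] = hl for distinct failed nodes j'_b = e'u + g'_b in a host rack e', and P̄_e = 0 for every e ∉ R ∪ {e'}, where R ⊆ {0,…,n̄−1}∖{e'} is a set of helper racks with |R| = d̄. Then for every subset S ⊆ R with |S| = s̄ − 1, every ẽ ∈ R∖S, and every subset U ⊆ {0,…,u−1} with |U| = u − v, it holds that h·l ≤ ∑_{e∈S} rank P̄_e + ∑_{g∈U} rank P_{ẽu+g}. -/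

import Mathlib

open Module Matrix

/-- If finitely many linear maps have trivial joint kernel, the dimension of the domain
is bounded by the sum of the dimensions of their ranges. -/
lemma finrank_le_sum_rank2 {F : Type*} [Field F]
    {V W₁ W₂ : Type*} [AddCommGroup V] [Module F V] [FiniteDimensional F V]
    [AddCommGroup W₁] [Module F W₁] [FiniteDimensional F W₁]
    [AddCommGroup W₂] [Module F W₂] [FiniteDimensional F W₂]
    {ι κ : Type*} [Fintype ι] [Fintype κ]
    (f : ι → V →ₗ[F] W₁) (g : κ → V →ₗ[F] W₂)
    (hker : ∀ x, (∀ i, f i x = 0) → (∀ j, g j x = 0) → x = 0) :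
    Module.finrank F V ≤ (∑ i, Module.finrank F (LinearMap.range (f i)))
      + ∑ j, Module.finrank F (LinearMap.range (g j)) := by
  classical
  let Φ : V →ₗ[F] (∀ i, LinearMap.range (f i)) × (∀ j, LinearMap.range (g j)) :=
    LinearMap.prod (LinearMap.pi fun i => (f i).rangeRestrict)
      (LinearMap.pi fun j => (g j).rangeRestrict)
  have hΦ : Function.Injective Φ := by
    rw [injective_iff_map_eq_zero]
    intro x hx
    have h1 := congrArg Prod.fst hx
    have h2 := congrArg Prod.snd hx
    refine hker x (fun i => ?_) (fun j => ?_)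
    · have := congrFun h1 i
      simpa [Φ, Subtype.ext_iff] using this
    · have := congrFun h2 j
      simpa [Φ, Subtype.ext_iff] using this
  calc Module.finrank F V
      ≤ Module.finrank F ((∀ i, LinearMap.range (f i)) × (∀ j, LinearMap.range (g j))) :=
        LinearMap.finrank_le_finrank_of_injective hΦ
    _ = (∑ i, Module.finrank F (LinearMap.range (f i)))
        + ∑ j, Module.finrank F (LinearMap.range (g j)) := by
        rw [Module.finrank_prod, Module.finrank_pi_fintype, Module.finrank_pi_fintype]

/-- A vector orthogonal to an MDS code (of dimension `K*l`) which is supported on at most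
`K` coordinates must vanish. -/
lemma dual_vanish {F : Type*} [Field F] {J : Type*} [Fintype J] [DecidableEq J]
    {l K : ℕ} (C : Submodule F (J → Fin l → F))
    (hdim : Module.finrank F C = K * l)
    (hMDS : ∀ c ∈ C, ∀ S : Finset J, S.card = K → (∀ j ∈ S, c j = 0) → c = 0)
    (w : J → Fin l → F)
    (hw : ∀ c ∈ C, ∑ j, ∑ i, w j i * c j i = 0)
    (T : Finset J) (hT : T.card = K)
    (hsupp : ∀ j ∉ T, w j = 0) :
    w = 0 := by
  classical
  let π : C →ₗ[F] ((j : T) → Fin l → F) :=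
    { toFun := fun c j => (c : J → Fin l → F) j
      map_add' := fun a b => rfl
      map_smul' := fun r a => rfl }
  have hinj : Function.Injective π := by
    rw [injective_iff_map_eq_zero]
    intro c hc
    have : (c : J → Fin l → F) = 0 := by
      refine hMDS c c.2 T hT (fun j hj => ?_)
      exact congrFun hc ⟨j, hj⟩
    exact Subtype.ext this
  have hcod : Module.finrank F ((j : T) → Fin l → F) = K * l := by
    rw [Module.finrank_pi_fintype]
    simp [Module.finrank_pi, Finset.sum_const, ← hT, Fintype.card_coe, mul_comm]
  have hsurj : Function.Surjective π := by
    have hrange : LinearMap.range π = ⊤ := by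
      apply Submodule.eq_top_of_finrank_eq
      rw [LinearMap.finrank_range_of_inj hinj, hdim, hcod]
    exact LinearMap.range_eq_top.mp hrange
  funext j0 i0
  by_cases hj0 : j0 ∈ T
  · -- use surjectivity to produce a codeword that is an indicator on T
    obtain ⟨c, hc⟩ := hsurj (fun j i => if (j : J) = j0 ∧ i = i0 then 1 else 0)
    have hcj : ∀ j ∈ T, ∀ i, (c : J → Fin l → F) j i
        = if j = j0 ∧ i = i0 then 1 else 0 := by
      intro j hj i
      exact congrFun (congrFun hc ⟨j, hj⟩) i
    have h0 := hw c c.2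
    have hrestrict : ∑ j, ∑ i, w j i * (c : J → Fin l → F) j i
        = ∑ j ∈ T, ∑ i, w j i * (c : J → Fin l → F) j i := by
      refine (Finset.sum_subset T.subset_univ (fun j _ hj => ?_)).symm
      simp [hsupp j hj]
    have heval : ∑ j ∈ T, ∑ i, w j i * (c : J → Fin l → F) j i = w j0 i0 := by
      have : ∀ j ∈ T, (∑ i, w j i * (c : J → Fin l → F) j i)
          = if j = j0 then w j i0 else 0 := by
        intro j hj
        rw [Finset.sum_congr rfl (fun i _ => by rw [hcj j hj i])]
        by_cases hjj : j = j0 <;> simp [hjj, mul_ite, Finset.sum_ite_eq']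
      rw [Finset.sum_congr rfl this, Finset.sum_ite_eq' T j0 (fun j => w j i0)]
      simp [hj0]
    rw [hrestrict, heval] at h0
    simpa using h0
  · exact congrFun (hsupp j0 hj0) i0

/-- **Rank trade-off inequality** (equations (12)–(13) in the proof of Theorem 1).
If the rows of `P` lie in `C^⊥`, the failed-node block has rank `hl`, and `P̄_e = 0`
off `R ∪ {e'}`, then for every `(s̄−1)`-subset `S ⊆ R`, every `ẽ ∈ R∖S`, and every
`(u−v)`-subset `U` of node indices, `h·l ≤ ∑_{e∈S} rank P̄_e + ∑_{g∈U} rank P_{ẽu+g}`. -/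
theorem rank_trade_off
    (F : Type*) [Field F] [Fintype F] [DecidableEq F]
    (u nb kb v db sb l h : ℕ)
    (hu : 1 < u) (hkb : 1 ≤ kb) (hnb : kb < nb) (hv : v < u)
    (hdb1 : kb ≤ db) (hdb2 : db ≤ nb - 1) (hsb : sb = db - kb + 1)
    (hh1 : 1 ≤ h) (hh2 : h ≤ u) (hh3 : h + v ≤ sb * u)
    (C : Submodule F ((Fin nb × Fin u) → Fin l → F))
    (hdim : Module.finrank F C = (kb * u + v) * l)
    (hMDS : ∀ c ∈ C, ∀ S : Finset (Fin nb × Fin u), S.card = kb * u + v →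
      (∀ j ∈ S, c j = 0) → c = 0)
    (P : Matrix (Fin (h * l)) ((Fin nb × Fin u) × Fin l) F)
    (hdual : ∀ ρ : Fin (h * l), ∀ c ∈ C,
      ∑ j : Fin nb × Fin u, ∑ i : Fin l, P ρ (j, i) * c j i = 0)
    (e' : Fin nb) (g' : Fin h → Fin u) (hg' : Function.Injective g')
    (hrank1 : (Matrix.of fun ρ (bi : Fin h × Fin l) =>
      P ρ ((e', g' bi.1), bi.2)).rank = h * l)
    (R : Finset (Fin nb)) (hR : R.card = db) (he'R : e' ∉ R)
    (hzero : ∀ e : Fin nb, e ∉ R → e ≠ e' → ∀ ρ g i, P ρ ((e, g), i) = 0) :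
    ∀ S ⊆ R, S.card = sb - 1 → ∀ et ∈ R, et ∉ S →
      ∀ U : Finset (Fin u), U.card = u - v →
        h * l ≤ (∑ e ∈ S, (Matrix.of fun ρ (gi : Fin u × Fin l) =>
            P ρ ((e, gi.1), gi.2)).rank)
          + ∑ g ∈ U, (Matrix.of fun ρ (i : Fin l) => P ρ ((et, g), i)).rank := by
  classical
  intro S hSR hScard et hetR hetS U hUcard
  -- block matrices
  set Me : Fin nb → Matrix (Fin (h*l)) (Fin u × Fin l) F :=
    fun e => Matrix.of fun ρ gi => P ρ ((e, gi.1), gi.2) with hMe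
  set Mg : Fin u → Matrix (Fin (h*l)) (Fin l) F :=
    fun g => Matrix.of fun ρ i => P ρ ((et, g), i) with hMgdef
  -- the failed block
  set B : Matrix (Fin (h*l)) (Fin h × Fin l) F :=
    Matrix.of (fun ρ (bi : Fin h × Fin l) => P ρ ((e', g' bi.1), bi.2)) with hB
  -- injectivity of x ↦ x ᵥ* B
  have hBinj : ∀ x : Fin (h*l) → F, Bᵀ.mulVec x = 0 → x = 0 := by
    intro x hx
    have hfd : Module.finrank F (Fin (h*l) → F) = h * l := by
      simp [Module.finrank_pi]
    have hrk : Module.finrank F (LinearMap.range Bᵀ.mulVecLin) = h * l := by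
      have : Bᵀ.rank = h * l := by rw [Matrix.rank_transpose]; exact hrank1
      exact this
    have hker0 : LinearMap.ker Bᵀ.mulVecLin = ⊥ := by
      have hrn := LinearMap.finrank_range_add_finrank_ker Bᵀ.mulVecLin
      rw [hrk, hfd] at hrn
      have : Module.finrank F (LinearMap.ker Bᵀ.mulVecLin) = 0 := by omega
      exact Submodule.finrank_eq_zero.mp this
    have : x ∈ LinearMap.ker Bᵀ.mulVecLin := by
      simpa [Matrix.mulVecLin, Matrix.mulVec_transpose] using hx
    rw [hker0] at this
    simpa using this
  -- the support set
  set A : Finset (Fin nb) := (R \ S).erase et with hA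
  set T : Finset (Fin nb × Fin u) :=
    (A ×ˢ Finset.univ) ∪ ({et} ×ˢ Uᶜ) ∪ ({e'} ×ˢ Finset.univ) with hT
  have hetRS : et ∈ R \ S := Finset.mem_sdiff.mpr ⟨hetR, hetS⟩
  have hAcard : A.card = kb - 1 := by
    rw [hA, Finset.card_erase_of_mem hetRS, Finset.card_sdiff_of_subset hSR, hR, hScard]
    omega
  have hUc : Uᶜ.card = v := by
    rw [Finset.card_compl, hUcard]
    simp only [Fintype.card_fin]
    omega
  have hTcard : T.card = kb * u + v := by
    have hd1 : Disjoint (A ×ˢ (Finset.univ : Finset (Fin u))) ({et} ×ˢ Uᶜ) := by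
      rw [Finset.disjoint_left]
      rintro ⟨a, b⟩ hab hab'
      simp only [Finset.mem_product, Finset.mem_singleton] at hab hab'
      have : a ∈ A := hab.1
      rw [hA] at this
      exact (Finset.ne_of_mem_erase this) hab'.1
    have hd2 : Disjoint ((A ×ˢ (Finset.univ : Finset (Fin u))) ∪ ({et} ×ˢ Uᶜ))
        ({e'} ×ˢ (Finset.univ : Finset (Fin u))) := by
      rw [Finset.disjoint_left]
      rintro ⟨a, b⟩ hab hab'
      simp only [Finset.mem_union, Finset.mem_product, Finset.mem_singleton] at hab hab'
      rcases hab with hab | hab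
      · have : a ∈ R \ S := Finset.mem_of_mem_erase hab.1
        rw [hab'.1] at this
        exact he'R (Finset.mem_sdiff.mp this).1
      · rw [hab.1] at hab'
        exact he'R (hab'.1 ▸ hetR)
    rw [hT, Finset.card_union_of_disjoint hd2, Finset.card_union_of_disjoint hd1]
    simp only [Finset.card_product, Finset.card_singleton, Finset.card_univ, Fintype.card_fin,
      hAcard, hUc, one_mul]
    have hmul : (kb - 1) * u + u = kb * u := by
      rw [Nat.sub_one_mul]
      exact Nat.sub_add_cancel (Nat.le_mul_of_pos_left u (by omega))
    omega
  -- main estimate via the joint-kernel lemma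
  have key := finrank_le_sum_rank2 (F := F)
    (f := fun e : S => ((Me e.1)ᵀ).mulVecLin)
    (g := fun g : U => ((Mg g.1)ᵀ).mulVecLin) ?hker
  case hker =>
    intro x hx1 hx2
    -- the dual vector w
    set w : (Fin nb × Fin u) → Fin l → F := fun j i => ∑ ρ, x ρ * P ρ (j, i) with hwdef
    have hxS : ∀ e ∈ S, ∀ g i, w (e, g) i = 0 := by
      intro e he g i
      have := congrFun (hx1 ⟨e, he⟩) (g, i)
      simpa [Matrix.mulVecLin, Matrix.mulVec, Matrix.vecMul, dotProduct, hwdef, hMe,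
        mul_comm] using this
    have hxU : ∀ g ∈ U, ∀ i, w (et, g) i = 0 := by
      intro g hg i
      have := congrFun (hx2 ⟨g, hg⟩) i
      simpa [Matrix.mulVecLin, Matrix.mulVec, Matrix.vecMul, dotProduct, hwdef, hMgdef,
        mul_comm] using this
    have hsupp : ∀ j ∉ T, w j = 0 := by
      rintro ⟨e, g⟩ hj
      simp only [hT, Finset.mem_union, Finset.mem_product, Finset.mem_singleton,
        Finset.mem_univ, and_true, not_or, not_and] at hj
      obtain ⟨⟨hj1, hj2⟩, hj3⟩ := hj
      funext i
      by_cases heR : e ∈ R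
      · by_cases heS : e ∈ S
        · exact hxS e heS g i
        · by_cases heet : e = et
          · subst heet
            have hgU : g ∈ U := by
              by_contra hgU
              exact (hj2 rfl) (Finset.mem_compl.mpr hgU)
            exact hxU g hgU i
          · exfalso
            apply hj1
            rw [hA]
            exact Finset.mem_erase.mpr ⟨heet, Finset.mem_sdiff.mpr ⟨heR, heS⟩⟩
      · simp only [hwdef]
        refine Finset.sum_eq_zero (fun ρ _ => ?_)
        rw [hzero e heR hj3 ρ g i, mul_zero]
    have hworth : ∀ c ∈ C, ∑ j, ∑ i, w j i * c j i = 0 := by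
      intro c hc
      calc ∑ j, ∑ i, w j i * c j i
          = ∑ j, ∑ i, ∑ ρ, x ρ * (P ρ (j, i) * c j i) := by
            simp only [hwdef, Finset.sum_mul, mul_assoc]
        _ = ∑ j, ∑ ρ, ∑ i, x ρ * (P ρ (j, i) * c j i) :=
            Finset.sum_congr rfl fun j _ => Finset.sum_comm
        _ = ∑ ρ, ∑ j, ∑ i, x ρ * (P ρ (j, i) * c j i) := Finset.sum_comm
        _ = ∑ ρ, x ρ * ∑ j, ∑ i, P ρ (j, i) * c j i := by
            simp only [Finset.mul_sum]
        _ = 0 := Finset.sum_eq_zero fun ρ _ => by rw [hdual ρ c hc, mul_zero]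
    have hw0 : w = 0 := dual_vanish C hdim hMDS w hworth T hTcard hsupp
    -- conclude x = 0 using the failed block
    apply hBinj
    funext bi
    have : w (e', g' bi.1) bi.2 = 0 := by rw [hw0]; rfl
    simpa [Matrix.mulVec, dotProduct, hB, hwdef, mul_comm] using this
  -- rewrite the conclusion of `key`
  have hlhs : Module.finrank F (Fin (h*l) → F) = h * l := by
    simp [Module.finrank_pi]
  have hrS : ∀ e : Fin nb,
      Module.finrank F (LinearMap.range ((Me e)ᵀ).mulVecLin) = (Me e).rank := by
    intro e
    rw [show Module.finrank F (LinearMap.range ((Me e)ᵀ).mulVecLin) = (Me e)ᵀ.rank from rfl,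
      Matrix.rank_transpose]
  have hrU : ∀ g : Fin u,
      Module.finrank F (LinearMap.range ((Mg g)ᵀ).mulVecLin) = (Mg g).rank := by
    intro g
    rw [show Module.finrank F (LinearMap.range ((Mg g)ᵀ).mulVecLin) = (Mg g)ᵀ.rank from rfl,
      Matrix.rank_transpose]
  rw [hlhs] at key
  calc h * l ≤ (∑ e : S, Module.finrank F (LinearMap.range ((Me e.1)ᵀ).mulVecLin))
      + ∑ g : U, Module.finrank F (LinearMap.range ((Mg g.1)ᵀ).mulVecLin) := key
    _ = (∑ e ∈ S, (Me e).rank) + ∑ g ∈ U, (Mg g).rank := by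
        rw [← Finset.sum_coe_sort S, ← Finset.sum_coe_sort U]
        exact congrArg₂ (· + ·) (Finset.sum_congr rfl fun e _ => hrS e.1)
          (Finset.sum_congr rfl fun g _ => hrU g.1)
    _ = _ := rfl
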